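/- Let ω and C be reals and i ≥ 1 an integer. Then f_0(C) = ω·C/3, and, provided C ≠ 3, the denominator in the definition of f_i(C) is nonzero, the denominator in the definition of f_{i−1}(2C/(3−C)) is nonzero, f_{i−1}(2C/(3−C)) ≠ 0, and f_{i−1}(2C/(3−C)) + (ω−1) ≠ 0, one has f_i(C) = ω / (1 + (ω−1)/f_{i−1}(2C/(3−C))). -/
import Mathlib


/-- The denominator in the definition of `f_i(C)`. -/
noncomputable def fDen (ω : ℝ) (i : ℕ) (C : ℝ) : ℝ :=
  3 ^ (i + 1) * (ω - 1) ^ i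
    + (3 * ((2 : ℝ) ^ i - 3 ^ i) * (ω - 1) ^ i - 2 ^ i * (ω - 1) ^ i * ω
        + 2 ^ i * ω ^ (i + 1)) * C

/-- `f_i(C) = 2^i ω^{i+1} C / (3^{i+1}(ω-1)^i + (3(2^i-3^i)(ω-1)^i - 2^i(ω-1)^i ω + 2^i ω^{i+1}) C)`. -/
noncomputable def fSeq (ω : ℝ) (i : ℕ) (C : ℝ) : ℝ :=
  2 ^ i * ω ^ (i + 1) * C / fDen ω i C

/-- `f_0(C) = ωC/3`, and for `i ≥ 1`, provided `C ≠ 3`, the relevant denominators are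
nonzero, `f_{i-1}(2C/(3-C)) ≠ 0` and `f_{i-1}(2C/(3-C)) + (ω-1) ≠ 0`, one has the
recurrence `f_i(C) = ω / (1 + (ω-1)/f_{i-1}(2C/(3-C)))`. -/
theorem fSeq_recurrence (ω C : ℝ) (i : ℕ) (hi : 1 ≤ i) :
    fSeq ω 0 C = ω * C / 3 ∧
    (C ≠ 3 → fDen ω i C ≠ 0 → fDen ω (i - 1) (2 * C / (3 - C)) ≠ 0 →
      fSeq ω (i - 1) (2 * C / (3 - C)) ≠ 0 →
      fSeq ω (i - 1) (2 * C / (3 - C)) + (ω - 1) ≠ 0 →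
      fSeq ω i C = ω / (1 + (ω - 1) / fSeq ω (i - 1) (2 * C / (3 - C)))) := by
  constructor
  · simp [fSeq, fDen]
  · obtain ⟨j, rfl⟩ : ∃ j, i = j + 1 := ⟨i - 1, (Nat.succ_pred_eq_of_pos hi).symm⟩
    simp only [Nat.add_sub_cancel]
    intro hC hd1 hd2 hf hfw
    have h3 : (3 : ℝ) - C ≠ 0 := sub_ne_zero.mpr (Ne.symm hC)
    have h1 : 1 + (ω - 1) / fSeq ω j (2 * C / (3 - C)) =
        (fSeq ω j (2 * C / (3 - C)) + (ω - 1)) / fSeq ω j (2 * C / (3 - C)) := by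
      field_simp
    have cancel : ∀ a s d : ℝ, d ≠ 0 → a / d / (s / d) = a / s := by
      intro a s d hd
      rcases eq_or_ne s 0 with rfl | hs
      · simp
      · field_simp
    have key1 : (3 - C) * ((2:ℝ) ^ j * ω ^ (j + 1) * (2 * C / (3 - C))
        + (ω - 1) * fDen ω j (2 * C / (3 - C))) = fDen ω (j + 1) C := by
      simp only [fDen]
      field_simp
      ring
    have key2 : (3 - C) * (ω * ((2:ℝ) ^ j * ω ^ (j + 1) * (2 * C / (3 - C))))
        = 2 ^ (j + 1) * ω ^ (j + 1 + 1) * C := by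
      field_simp
      ring
    rw [h1, div_div_eq_mul_div]
    simp only [fSeq]
    rw [div_add' _ _ _ hd2, mul_div_assoc', cancel _ _ _ hd2, ← key1, ← key2,
      mul_div_mul_left _ _ h3]
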